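/- Abundance of good parity-check matrices (claim following Proposition 3.1): Let n and k ≤ n be natural numbers, let S ⊆ 𝔽₂ⁿ be a finite set with |S| = 2^m, and set t = n − k − m (assume t ≥ 0). Call z ∈ S bad for a matrix H ∈ 𝔽₂^{(n−k)×n} if there exists z' ∈ S with z' ≠ z and H·z = H·z'. Then the number of matrices H ∈ 𝔽₂^{(n−k)×n} for which more than a 2^{−t/2}-fraction of the elements of S are bad (i.e., the number of bad z exceeds 2^{−t/2}·2^m) is at most 2^{−t/2}·2^{(n−k)n}. Equivalently, for at least a (1 − 2^{−t/2})-fraction of matrices H, at most a 2^{−t/2}-fraction of z ∈ S have a syndrome collision within S. -/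

import Mathlib

open Finset

private lemma fiber_card {n : ℕ} (v : Fin n → ZMod 2) (hv : v ≠ 0) :
    (univ.filter (fun r : Fin n → ZMod 2 => ∑ i, r i * v i = 0)).card * 2 = 2 ^ n := by
  obtain ⟨j, hj⟩ := Function.ne_iff.mp hv
  have h01 : ∀ a : ZMod 2, a ≠ 0 → a = 1 := by decide
  have hj' : v j ≠ 0 := by simpa using hj
  have hvj : v j = 1 := h01 _ hj'
  set w : Fin n → ZMod 2 := Pi.single j 1 with hw
  have hshift : ∀ r : Fin n → ZMod 2,
      (∑ i, (r + w) i * v i) = (∑ i, r i * v i) + 1 := by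
    intro r
    have hsingle : (∑ i, w i * v i) = v j := by
      rw [Finset.sum_eq_single j]
      · simp [hw]
      · intro b _ hb; simp [hw, Pi.single_eq_of_ne hb]
      · simp
    simp only [Pi.add_apply, add_mul, Finset.sum_add_distrib, hsingle, hvj]
  have hinv : ∀ r : Fin n → ZMod 2, r + w + w = r := by
    intro r
    funext i
    simp [add_assoc, CharTwo.add_self_eq_zero]
  have key : (univ.filter (fun r : Fin n → ZMod 2 => ∑ i, r i * v i = 0)).card
      = (univ.filter (fun r : Fin n → ZMod 2 => ¬ (∑ i, r i * v i = 0))).card := by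
    apply Finset.card_bij' (fun r _ => r + w) (fun r _ => r + w)
    · intro r hr
      simp only [mem_filter, mem_univ, true_and] at hr ⊢
      rw [hshift, hr]
      decide
    · intro r hr
      simp only [mem_filter, mem_univ, true_and] at hr ⊢
      rw [hshift, h01 _ hr]
      decide
    · intro r _; exact hinv r
    · intro r _; exact hinv r
  have htot := Finset.card_filter_add_card_filter_not
    (p := fun r : Fin n → ZMod 2 => ∑ i, r i * v i = 0) (s := (univ : Finset (Fin n → ZMod 2)))
  have hcard : Fintype.card (Fin n → ZMod 2) = 2 ^ n := by simp
  rw [Finset.card_univ, hcard] at htot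
  rw [mul_two]
  nth_rewrite 2 [key]
  exact htot

open Classical Finset

private lemma ker_card {n q : ℕ} (v : Fin n → ZMod 2) (hv : v ≠ 0)
    (c : ℕ) (hc : (univ.filter (fun r : Fin n → ZMod 2 => ∑ i, r i * v i = 0)).card = c) :
    (univ.filter (fun H : Matrix (Fin q) (Fin n) (ZMod 2) => H.mulVec v = 0)).card
      = c ^ q := by
  classical
  have hiff : ∀ H : Matrix (Fin q) (Fin n) (ZMod 2),
      H.mulVec v = 0 ↔ ∀ i, (∑ j, H i j * v j) = 0 := by
    intro H
    rw [funext_iff]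
    simp [Matrix.mulVec, dotProduct]
  have : (univ.filter (fun H : Matrix (Fin q) (Fin n) (ZMod 2) => H.mulVec v = 0)).card
      = Fintype.card {H : Matrix (Fin q) (Fin n) (ZMod 2) // ∀ i, (∑ j, H i j * v j) = 0} := by
    rw [Fintype.card_subtype]
    apply Finset.card_bij (fun H _ => H) <;> simp [hiff]
  rw [this]
  have e : {H : Matrix (Fin q) (Fin n) (ZMod 2) // ∀ i, (∑ j, H i j * v j) = 0}
      ≃ ∀ _ : Fin q, {r : Fin n → ZMod 2 // (∑ j, r j * v j) = 0} :=
    { toFun := fun H i => ⟨H.1 i, H.2 i⟩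
      invFun := fun f => ⟨Matrix.of (fun i => (f i).1), fun i => (f i).2⟩
      left_inv := fun H => rfl
      right_inv := fun f => rfl }
  rw [Fintype.card_congr e, Fintype.card_pi]
  simp [Fintype.card_subtype, hc]

open Classical Finset in
private lemma bad_card {n q m : ℕ} (S : Finset (Fin n → ZMod 2)) (hS : S.card = 2 ^ m)
    (z : Fin n → ZMod 2) :
    ((univ.filter (fun H : Matrix (Fin q) (Fin n) (ZMod 2) =>
        ∃ z' ∈ S, z' ≠ z ∧ H.mulVec z = H.mulVec z')).card) * 2 ^ q
      ≤ 2 ^ m * 2 ^ (n * q) := by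
  classical
  have hadd : ∀ x y : Fin n → ZMod 2, x + y = 0 ↔ x = y := by
    intro x y
    rw [funext_iff, funext_iff]
    apply forall_congr'
    intro i
    simp only [Pi.add_apply, Pi.zero_apply]
    revert i
    have : ∀ a b : ZMod 2, a + b = 0 ↔ a = b := by decide
    intro i; exact this (x i) (y i)
  -- subset of biUnion
  have hsub : (univ.filter (fun H : Matrix (Fin q) (Fin n) (ZMod 2) =>
        ∃ z' ∈ S, z' ≠ z ∧ H.mulVec z = H.mulVec z'))
      ⊆ (S.erase z).biUnion (fun z' => univ.filter
          (fun H : Matrix (Fin q) (Fin n) (ZMod 2) => H.mulVec (z + z') = 0)) := by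
    intro H hH
    simp only [mem_filter, mem_univ, true_and] at hH
    obtain ⟨z', hz'S, hz'ne, hz'eq⟩ := hH
    rw [Finset.mem_biUnion]
    refine ⟨z', Finset.mem_erase.mpr ⟨hz'ne, hz'S⟩, ?_⟩
    simp only [mem_filter, mem_univ, true_and]
    rw [Matrix.mulVec_add, hz'eq]
    funext i
    exact CharTwo.add_self_eq_zero (H.mulVec z' i)
  calc (univ.filter (fun H : Matrix (Fin q) (Fin n) (ZMod 2) =>
        ∃ z' ∈ S, z' ≠ z ∧ H.mulVec z = H.mulVec z')).card * 2 ^ q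
      ≤ (∑ z' ∈ S.erase z, (univ.filter
          (fun H : Matrix (Fin q) (Fin n) (ZMod 2) => H.mulVec (z + z') = 0)).card) * 2 ^ q := by
        gcongr
        exact le_trans (Finset.card_le_card hsub) (Finset.card_biUnion_le)
    _ = ∑ z' ∈ S.erase z, (univ.filter
          (fun H : Matrix (Fin q) (Fin n) (ZMod 2) => H.mulVec (z + z') = 0)).card * 2 ^ q := by
        rw [Finset.sum_mul]
    _ ≤ ∑ _z' ∈ S.erase z, 2 ^ (n * q) := by
        apply Finset.sum_le_sum
        intro z' hz'
        have hne : z + z' ≠ 0 := by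
          rw [Ne, hadd]
          exact fun h => (Finset.mem_erase.mp hz').1 h.symm
        rw [ker_card (z + z') hne _ rfl, ← Nat.mul_pow, Nat.pow_mul]
        exact Nat.pow_le_pow_left (le_of_eq (fiber_card (z + z') hne)) q
    _ ≤ 2 ^ m * 2 ^ (n * q) := by
        rw [Finset.sum_const, smul_eq_mul]
        gcongr
        calc (S.erase z).card ≤ S.card := Finset.card_erase_le
          _ = 2 ^ m := hS

open Classical in
/-- Abundance of good parity-check matrices (claim following Proposition 3.1). -/
theorem abundance_of_good_parity_check_matrices
    (n k m t : ℕ) (hk : k ≤ n) (hm : k + m ≤ n) (ht : t = n - k - m)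
    (S : Finset (Fin n → ZMod 2)) (hS : S.card = 2 ^ m) :
    (Nat.card {H : Matrix (Fin (n - k)) (Fin n) (ZMod 2) //
        (2 : ℝ) ^ (-(t : ℝ) / 2) * 2 ^ m <
          ((S.filter (fun z => ∃ z' ∈ S, z' ≠ z ∧ H.mulVec z = H.mulVec z')).card : ℝ)} : ℝ) ≤
      (2 : ℝ) ^ (-(t : ℝ) / 2) * 2 ^ ((n - k) * n) := by
  classical
  have hq : t + m = n - k := by omega
  set T : ℝ := (2 : ℝ) ^ (-(t : ℝ) / 2) with hT
  have hTpos : 0 < T := Real.rpow_pos_of_pos (by norm_num) _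
  set θ : ℝ := T * 2 ^ m with hθ
  have hθpos : 0 < θ := by positivity
  set f : Matrix (Fin (n - k)) (Fin n) (ZMod 2) → ℕ :=
    fun H => (S.filter (fun z => ∃ z' ∈ S, z' ≠ z ∧ H.mulVec z = H.mulVec z')).card with hf
  rw [Nat.card_eq_fintype_card, Fintype.card_subtype]
  set B := Finset.univ.filter
    (fun H : Matrix (Fin (n - k)) (Fin n) (ZMod 2) => θ < (f H : ℝ)) with hB
  -- double counting
  have hswap : (∑ H : Matrix (Fin (n - k)) (Fin n) (ZMod 2), f H)
      = ∑ z ∈ S, (Finset.univ.filter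
          (fun H : Matrix (Fin (n - k)) (Fin n) (ZMod 2) =>
            ∃ z' ∈ S, z' ≠ z ∧ H.mulVec z = H.mulVec z')).card := by
    simp only [hf, Finset.card_filter]
    exact Finset.sum_comm
  have hsum : (∑ H : Matrix (Fin (n - k)) (Fin n) (ZMod 2), f H) * 2 ^ (n - k)
      ≤ 2 ^ m * (2 ^ m * 2 ^ (n * (n - k))) := by
    rw [hswap, Finset.sum_mul]
    calc (∑ z ∈ S, (Finset.univ.filter
          (fun H : Matrix (Fin (n - k)) (Fin n) (ZMod 2) =>
            ∃ z' ∈ S, z' ≠ z ∧ H.mulVec z = H.mulVec z')).card * 2 ^ (n - k))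
        ≤ ∑ _z ∈ S, 2 ^ m * 2 ^ (n * (n - k)) :=
          Finset.sum_le_sum (fun z _ => bad_card S hS z)
      _ = 2 ^ m * (2 ^ m * 2 ^ (n * (n - k))) := by
          rw [Finset.sum_const, smul_eq_mul, hS]
  -- Markov
  have hmarkov : (B.card : ℝ) * θ
      ≤ ∑ H : Matrix (Fin (n - k)) (Fin n) (ZMod 2), (f H : ℝ) := by
    calc (B.card : ℝ) * θ = ∑ _H ∈ B, θ := by rw [Finset.sum_const, nsmul_eq_mul]
      _ ≤ ∑ H ∈ B, (f H : ℝ) := Finset.sum_le_sum (fun H hH => by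
          have := (Finset.mem_filter.mp hH).2
          exact le_of_lt this)
      _ ≤ ∑ H : Matrix (Fin (n - k)) (Fin n) (ZMod 2), (f H : ℝ) :=
          Finset.sum_le_sum_of_subset_of_nonneg (Finset.subset_univ B)
            (fun _ _ _ => by positivity)
  -- key power identity
  have h2t : ((2 : ℝ) ^ t) ≠ 0 := by positivity
  have h1 : T * T = ((2 : ℝ) ^ t)⁻¹ := by
    rw [hT, ← Real.rpow_add (by norm_num)]
    rw [show -(t : ℝ) / 2 + -(t : ℝ) / 2 = -(t : ℝ) by ring]
    rw [Real.rpow_neg (by norm_num), Real.rpow_natCast]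
  have h2 : (2 : ℝ) ^ (n - k) = 2 ^ t * 2 ^ m := by
    rw [← pow_add, hq]
  have hkey : (T * 2 ^ ((n - k) * n)) * (θ * 2 ^ (n - k))
      = 2 ^ m * (2 ^ m * 2 ^ (n * (n - k))) := by
    rw [Nat.mul_comm (n - k) n, hθ]
    calc (T * 2 ^ (n * (n - k))) * ((T * 2 ^ m) * 2 ^ (n - k))
        = (T * T) * ((2 : ℝ) ^ (n - k) * (2 ^ m * 2 ^ (n * (n - k)))) := by ring
      _ = ((2 : ℝ) ^ t)⁻¹ * ((2 ^ t * 2 ^ m) * (2 ^ m * 2 ^ (n * (n - k)))) := by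
          rw [h1, h2]
      _ = 2 ^ m * (2 ^ m * 2 ^ (n * (n - k))) := by
          field_simp
  -- assemble
  have hpos : (0 : ℝ) < θ * 2 ^ (n - k) := by positivity
  apply le_of_mul_le_mul_right _ hpos
  calc (B.card : ℝ) * (θ * 2 ^ (n - k))
      = ((B.card : ℝ) * θ) * 2 ^ (n - k) := by ring
    _ ≤ (∑ H : Matrix (Fin (n - k)) (Fin n) (ZMod 2), (f H : ℝ)) * 2 ^ (n - k) := by
        gcongr
    _ = (((∑ H : Matrix (Fin (n - k)) (Fin n) (ZMod 2), f H) * 2 ^ (n - k) : ℕ) : ℝ) := by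
        push_cast
        ring
    _ ≤ ((2 ^ m * (2 ^ m * 2 ^ (n * (n - k))) : ℕ) : ℝ) := by exact_mod_cast hsum
    _ = (T * 2 ^ ((n - k) * n)) * (θ * 2 ^ (n - k)) := by
        rw [hkey]
        push_cast
        ring
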